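/- Let H be a real constant with 0 ≤ H < 1. Then the function φ(s) = −2·arctan((1 − H)·tanh(√(1 − H²)·s)/√(1 − H²)) satisfies φ'(s) = 2·H − 2·cos φ(s) for all s ∈ ℝ. -/

import Mathlib

lemma hasDerivAt_tanh' (x : ℝ) :
    HasDerivAt Real.tanh (1 - Real.tanh x ^ 2) x := by
  have hc : Real.cosh x ≠ 0 := (Real.cosh_pos x).ne'
  have h : HasDerivAt (fun y => Real.sinh y / Real.cosh y)
      ((Real.cosh x * Real.cosh x - Real.sinh x * Real.cosh x / Real.cosh x * Real.sinh x) /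
        Real.cosh x ^ 2) x := by
    have := (Real.hasDerivAt_sinh x).div (Real.hasDerivAt_cosh x) hc
    exact this.congr_deriv (by rw [mul_div_cancel_right₀ _ hc])
  have heq : (fun y => Real.sinh y / Real.cosh y) = Real.tanh := by
    funext y; rw [Real.tanh_eq_sinh_div_cosh]
  rw [heq] at h
  convert h using 1
  rw [Real.tanh_eq_sinh_div_cosh]
  have h2 := Real.cosh_sq_sub_sinh_sq x
  field_simp

/-- for `0 ≤ H < 1`, the function
`φ(s) = -2 arctan((1-H) tanh(√(1-H²) s) / √(1-H²))` solves
`φ' = 2H - 2 cos φ` on all of `ℝ`. -/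
theorem stmt_13 (H : ℝ) (h0 : 0 ≤ H) (h1 : H < 1) (φ : ℝ → ℝ)
    (hφ : φ = fun s => -2 * Real.arctan
      ((1 - H) * Real.tanh (Real.sqrt (1 - H ^ 2) * s) / Real.sqrt (1 - H ^ 2))) :
    ∀ s : ℝ, HasDerivAt φ (2 * H - 2 * Real.cos (φ s)) s := by
  intro s
  set a := Real.sqrt (1 - H ^ 2) with ha_def
  have hH2 : (0:ℝ) < 1 - H ^ 2 := by nlinarith
  have ha2 : a ^ 2 = 1 - H ^ 2 := Real.sq_sqrt hH2.le
  have ha : 0 < a := Real.sqrt_pos.2 hH2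
  set t := Real.tanh (a * s) with ht_def
  set u := (1 - H) * t / a with hu_def
  have hu2 : 0 < 1 + u ^ 2 := by positivity
  -- derivative of inner function
  have hinner : HasDerivAt (fun s => (1 - H) * Real.tanh (a * s) / a)
      ((1 - H) * ((1 - t ^ 2) * a) / a) s := by
    have h1' : HasDerivAt (fun s : ℝ => a * s) a s := by
      simpa using (hasDerivAt_id s).const_mul a
    have h2' := (hasDerivAt_tanh' (a * s)).comp s h1'
    exact ((h2'.const_mul (1 - H)).div_const a)
  have harc : HasDerivAt (fun s => Real.arctan ((1 - H) * Real.tanh (a * s) / a))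
      (1 / (1 + u ^ 2) * ((1 - H) * ((1 - t ^ 2) * a) / a)) s := by
    exact (Real.hasDerivAt_arctan u).comp s hinner
  have hφ' : HasDerivAt φ
      (-2 * (1 / (1 + u ^ 2) * ((1 - H) * ((1 - t ^ 2) * a) / a))) s := by
    rw [hφ]
    exact harc.const_mul (-2)
  convert hφ' using 1
  -- compute cos (φ s)
  have hφs : φ s = -2 * Real.arctan u := by rw [hφ]
  have hcos : Real.cos (φ s) = (1 - u ^ 2) / (1 + u ^ 2) := by
    rw [hφs, show (-2:ℝ) * Real.arctan u = -(2 * Real.arctan u) by ring,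
      Real.cos_neg, Real.cos_two_mul, Real.cos_arctan]
    rw [div_pow, one_pow, Real.sq_sqrt (by positivity)]
    field_simp
    ring
  have key : (1 + H) * u ^ 2 = (1 - H) * t ^ 2 := by
    have hu2eq : u ^ 2 = (1 - H) ^ 2 * t ^ 2 / a ^ 2 := by
      rw [hu_def, div_pow, mul_pow]
    rw [hu2eq, ha2]
    field_simp
    ring
  rw [hcos]
  have hsimp : (1 - H) * ((1 - t ^ 2) * a) / a = (1 - H) * (1 - t ^ 2) := by
    field_simp
  rw [hsimp]
  field_simp
  linear_combination key
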